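/- Let m ≥ 10 and let G = (A,B) be a bipartite digraph with |A| = m+1 and |B| = m such that δ⁰(G) ≥ (7m+2)/8. Let x, y ∈ A be distinct. Then for every orientation Q of a path on 2m+1 vertices, G contains a spanning copy of Q whose initial vertex is x and whose final vertex is y; that is, G contains a Hamilton path of any given orientation between x and y. -/

import Mathlib

open Finset

noncomputable section

variable {n : ℕ}

def dPlus (G : Finset (Fin n × Fin n)) (X : Finset (Fin n)) (x : Fin n) : ℕ :=
  (G.filter fun e => e.1 = x ∧ e.2 ∈ X).card

def dMinus (G : Finset (Fin n × Fin n)) (X : Finset (Fin n)) (x : Fin n) : ℕ :=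
  (G.filter fun e => e.2 = x ∧ e.1 ∈ X).card

def MinSemi (G : Finset (Fin n × Fin n)) (r : ℝ) : Prop :=
  ∀ x : Fin n, r ≤ (dPlus G Finset.univ x : ℝ) ∧ r ≤ (dMinus G Finset.univ x : ℝ)

def PathEmbed (G : Finset (Fin n × Fin n)) (p : ℕ → Bool) (ℓ : ℕ) (f : ℕ → Fin n) : Prop :=
  Set.InjOn f (Set.Iic ℓ) ∧
    ∀ i < ℓ, if p i then (f i, f (i + 1)) ∈ G else (f (i + 1), f i) ∈ G

/-- let `m ≥ 10` and let `G` be a bipartite digraph with vertex classes `A`, `B`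
of sizes `m+1` and `m` and minimum semidegree at least `(7m+2)/8`. Then between any two
distinct vertices `x, y ∈ A` there is a Hamilton path of any given orientation. -/
theorem stmt_2 (m : ℕ) (hm : 10 ≤ m)
    (G : Finset (Fin (2 * m + 1) × Fin (2 * m + 1)))
    (A B : Finset (Fin (2 * m + 1)))
    (hpart : A ∪ B = Finset.univ) (hdisj : Disjoint A B)
    (hA : A.card = m + 1) (hB : B.card = m)
    (hbip : ∀ e ∈ G, (e.1 ∈ A ∧ e.2 ∈ B) ∨ (e.1 ∈ B ∧ e.2 ∈ A))
    (hdeg : MinSemi G ((7 * m + 2 : ℝ) / 8))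
    (x y : Fin (2 * m + 1)) (hx : x ∈ A) (hy : y ∈ A) (hxy : x ≠ y)
    (p : ℕ → Bool) :
    ∃ f : ℕ → Fin (2 * m + 1), PathEmbed G p (2 * m) f ∧
      (∀ v : Fin (2 * m + 1), ∃ i ≤ 2 * m, f i = v) ∧
      f 0 = x ∧ f (2 * m) = y := by
  classical
  -- vertices of A are not in B
  have hAnB : ∀ a ∈ A, a ∉ B := fun a ha hb => Finset.disjoint_left.mp hdisj ha hb
  -- degree lemmas
  have degA : ∀ a ∈ A, ∀ d : Bool,
      7 * m + 2 ≤ 8 * (B.filter (fun b => if d then (a, b) ∈ G else (b, a) ∈ G)).card := by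
    intro a ha d
    have hcard : (B.filter (fun b => if d then (a, b) ∈ G else (b, a) ∈ G)).card
        = if d then dPlus G Finset.univ a else dMinus G Finset.univ a := by
      cases d
      · simp only [if_false, Bool.false_eq_true]
        unfold dMinus
        have himg : G.filter (fun e => e.2 = a ∧ e.1 ∈ Finset.univ)
            = (B.filter fun b => (b, a) ∈ G).image (fun b => (b, a)) := by
          ext e
          simp only [mem_filter, mem_image, mem_univ, and_true]
          constructor
          · rintro ⟨heG, h2⟩
            refine ⟨e.1, ⟨?_, ?_⟩, ?_⟩
            · rcases hbip e heG with ⟨h1, hb⟩ | ⟨hb, h1⟩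
              · exact absurd (h2 ▸ hb) (hAnB a ha)
              · exact hb
            · rw [← h2]; exact heG
            · rw [← h2]
          · rintro ⟨b, ⟨hbB, hbG⟩, rfl⟩
            exact ⟨hbG, rfl⟩
        rw [himg, Finset.card_image_of_injective]
        intro b b' h
        exact (Prod.mk.injEq _ _ _ _ ▸ h : b = b' ∧ _).1
      · simp only [if_true]
        unfold dPlus
        have himg : G.filter (fun e => e.1 = a ∧ e.2 ∈ Finset.univ)
            = (B.filter fun b => (a, b) ∈ G).image (fun b => (a, b)) := by
          ext e
          simp only [mem_filter, mem_image, mem_univ, and_true]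
          constructor
          · rintro ⟨heG, h1⟩
            refine ⟨e.2, ⟨?_, ?_⟩, ?_⟩
            · rcases hbip e heG with ⟨h2, hb⟩ | ⟨hb, h2⟩
              · exact hb
              · exact absurd (h1 ▸ hb) (hAnB a ha)
            · rw [← h1]; exact heG
            · rw [← h1]
          · rintro ⟨b, ⟨hbB, hbG⟩, rfl⟩
            exact ⟨hbG, rfl⟩
        rw [himg, Finset.card_image_of_injective]
        intro b b' h
        exact (Prod.mk.injEq _ _ _ _ ▸ h : _ ∧ b = b').2
    rw [hcard]
    have h1 := (hdeg a).1
    have h2 := (hdeg a).2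
    cases d
    · simp only [Bool.false_eq_true, if_false]
      have : (7 * m + 2 : ℝ) ≤ 8 * (dMinus G Finset.univ a : ℝ) := by linarith
      exact_mod_cast this
    · simp only [if_true]
      have : (7 * m + 2 : ℝ) ≤ 8 * (dPlus G Finset.univ a : ℝ) := by linarith
      exact_mod_cast this
  have degB : ∀ b ∈ B, ∀ d : Bool,
      7 * m + 2 ≤ 8 * (A.filter (fun a' => if d then (b, a') ∈ G else (a', b) ∈ G)).card := by
    intro b hb d
    have hBnA : b ∉ A := fun hbA => hAnB b hbA hb
    have hcard : (A.filter (fun a' => if d then (b, a') ∈ G else (a', b) ∈ G)).card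
        = if d then dPlus G Finset.univ b else dMinus G Finset.univ b := by
      cases d
      · simp only [if_false, Bool.false_eq_true]
        unfold dMinus
        have himg : G.filter (fun e => e.2 = b ∧ e.1 ∈ Finset.univ)
            = (A.filter fun a' => (a', b) ∈ G).image (fun a' => (a', b)) := by
          ext e
          simp only [mem_filter, mem_image, mem_univ, and_true]
          constructor
          · rintro ⟨heG, h2⟩
            refine ⟨e.1, ⟨?_, ?_⟩, ?_⟩
            · rcases hbip e heG with ⟨h1, hb2⟩ | ⟨hb2, h1⟩
              · exact h1
              · exact absurd h1 (by rw [h2]; exact hBnA)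
            · rw [← h2]; exact heG
            · rw [← h2]
          · rintro ⟨a', ⟨haA, haG⟩, rfl⟩
            exact ⟨haG, rfl⟩
        rw [himg, Finset.card_image_of_injective]
        intro c c' h
        exact (Prod.mk.injEq _ _ _ _ ▸ h : c = c' ∧ _).1
      · simp only [if_true]
        unfold dPlus
        have himg : G.filter (fun e => e.1 = b ∧ e.2 ∈ Finset.univ)
            = (A.filter fun a' => (b, a') ∈ G).image (fun a' => (b, a')) := by
          ext e
          simp only [mem_filter, mem_image, mem_univ, and_true]
          constructor
          · rintro ⟨heG, h1⟩
            refine ⟨e.2, ⟨?_, ?_⟩, ?_⟩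
            · rcases hbip e heG with ⟨h2, hb2⟩ | ⟨hb2, h2⟩
              · exact absurd h2 (by rw [h1]; exact hBnA)
              · exact h2
            · rw [← h1]; exact heG
            · rw [← h1]
          · rintro ⟨a', ⟨haA, haG⟩, rfl⟩
            exact ⟨haG, rfl⟩
        rw [himg, Finset.card_image_of_injective]
        intro c c' h
        exact (Prod.mk.injEq _ _ _ _ ▸ h : _ ∧ c = c').2
    rw [hcard]
    have h1 := (hdeg b).1
    have h2 := (hdeg b).2
    cases d
    · simp only [Bool.false_eq_true, if_false]
      have : (7 * m + 2 : ℝ) ≤ 8 * (dMinus G Finset.univ b : ℝ) := by linarith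
      exact_mod_cast this
    · simp only [if_true]
      have : (7 * m + 2 : ℝ) ≤ 8 * (dPlus G Finset.univ b : ℝ) := by linarith
      exact_mod_cast this
  obtain ⟨a, ha0, ham, haA, hainj, hasurj⟩ :
      ∃ a : ℕ → Fin (2 * m + 1), a 0 = x ∧ a m = y ∧ (∀ k ≤ m, a k ∈ A) ∧
        (∀ k ≤ m, ∀ l ≤ m, a k = a l → k = l) ∧ (∀ v ∈ A, ∃ k ≤ m, a k = v) := by
    have hxey : x ∈ A.erase y := Finset.mem_erase.mpr ⟨hxy, hx⟩
    have hA' : ((A.erase y).erase x).card = m - 1 := by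
      rw [Finset.card_erase_of_mem hxey, Finset.card_erase_of_mem hy, hA]
      omega
    set A' := (A.erase y).erase x with hA'def
    set e := A'.equivFinOfCardEq hA' with he
    set g : ℕ → Fin (2 * m + 1) := fun k =>
      if h : k - 1 < m - 1 then (e.symm ⟨k - 1, h⟩ : Fin (2 * m + 1)) else x with hg
    set af : ℕ → Fin (2 * m + 1) := fun k =>
      if k = 0 then x else if k = m then y else g k with haf
    have hxA' : x ∉ A' := Finset.notMem_erase x _
    have hyA' : y ∉ A' := fun h => Finset.notMem_erase y _ (Finset.mem_of_mem_erase h)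
    have hafmid : ∀ j, 1 ≤ j → j ≤ m - 1 → af j ∈ A' := by
      intro j h1 h2
      simp only [haf, if_neg (by omega : j ≠ 0), if_neg (by omega : j ≠ m), hg]
      rw [dif_pos (by omega : j - 1 < m - 1)]
      exact (e.symm ⟨j - 1, by omega⟩).2
    have haf0 : af 0 = x := by simp [haf]
    have hafm : af m = y := by
      have hm0 : m ≠ 0 := by omega
      simp [haf]
      intro h
      exact absurd h hm0
    have hA'A : A' ⊆ A := fun v hv =>
      Finset.mem_of_mem_erase (Finset.mem_of_mem_erase hv)
    refine ⟨af, haf0, hafm, ?_, ?_, ?_⟩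
    · intro k hk
      rcases Nat.eq_zero_or_pos k with rfl | h1
      · rw [haf0]; exact hx
      rcases eq_or_ne k m with rfl | h2
      · rw [hafm]; exact hy
      exact hA'A (hafmid k h1 (by omega))
    · intro k hk l hl heq
      have key : ∀ j ≤ m, (j = 0 ∧ af j = x) ∨ (j = m ∧ af j = y) ∨
          (1 ≤ j ∧ j ≤ m - 1 ∧ af j ∈ A') := by
        intro j hj
        rcases Nat.eq_zero_or_pos j with rfl | h1
        · exact Or.inl ⟨rfl, haf0⟩
        rcases eq_or_ne j m with rfl | h2
        · exact Or.inr (Or.inl ⟨rfl, hafm⟩)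
        exact Or.inr (Or.inr ⟨h1, by omega, hafmid j h1 (by omega)⟩)
      rcases key k hk with ⟨hk0, hkx⟩ | ⟨hkm, hky⟩ | ⟨hk1, hk2, hkA⟩ <;>
        rcases key l hl with ⟨hl0, hlx⟩ | ⟨hlm, hly⟩ | ⟨hl1, hl2, hlA⟩
      · omega
      · exact absurd (hkx ▸ hly ▸ heq) hxy
      · exact absurd hlA (by rw [← heq, hkx]; exact hxA')
      · exact absurd (hky ▸ hlx ▸ heq).symm hxy
      · omega
      · exact absurd hlA (by rw [← heq, hky]; exact hyA')
      · exact absurd hkA (by rw [heq, hlx]; exact hxA')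
      · exact absurd hkA (by rw [heq, hly]; exact hyA')
      · -- middle-middle
        have hkg : af k = (e.symm ⟨k - 1, by omega⟩ : Fin (2 * m + 1)) := by
          simp only [haf, if_neg (by omega : k ≠ 0), if_neg (by omega : k ≠ m), hg]
          rw [dif_pos (by omega : k - 1 < m - 1)]
        have hlg : af l = (e.symm ⟨l - 1, by omega⟩ : Fin (2 * m + 1)) := by
          simp only [haf, if_neg (by omega : l ≠ 0), if_neg (by omega : l ≠ m), hg]
          rw [dif_pos (by omega : l - 1 < m - 1)]
        rw [hkg, hlg] at heq
        have := e.symm.injective (Subtype.coe_injective heq)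
        have := Fin.mk.injEq (k-1) _ (l-1) _ ▸ this
        omega
    · intro v hv
      rcases eq_or_ne v x with rfl | hvx
      · exact ⟨0, by omega, haf0⟩
      rcases eq_or_ne v y with rfl | hvy
      · exact ⟨m, le_refl m, hafm⟩
      have hvA' : v ∈ A' := Finset.mem_erase.mpr ⟨hvx, Finset.mem_erase.mpr ⟨hvy, hv⟩⟩
      refine ⟨(e ⟨v, hvA'⟩ : ℕ) + 1, by have := (e ⟨v, hvA'⟩).2; omega, ?_⟩
      have h1 : (e ⟨v, hvA'⟩ : ℕ) + 1 ≠ 0 := by omega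
      have h2 : (e ⟨v, hvA'⟩ : ℕ) + 1 ≠ m := by have := (e ⟨v, hvA'⟩).2; omega
      simp only [haf, if_neg h1, if_neg h2, hg]
      rw [dif_pos (by simpa using (e ⟨v, hvA'⟩).2)]
      have : (⟨(e ⟨v, hvA'⟩ : ℕ) + 1 - 1, by simpa using (e ⟨v, hvA'⟩).2⟩ : Fin (m-1))
          = e ⟨v, hvA'⟩ := by
        apply Fin.ext; simp
      rw [this, Equiv.symm_apply_apply]
  -- the candidate sets for the B-vertices between consecutive A-vertices
  set S : ℕ → Finset (Fin (2 * m + 1)) := fun k =>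
    (B.filter fun b => if p (2 * k) then (a k, b) ∈ G else (b, a k) ∈ G) ∩
    (B.filter fun b => if p (2 * k + 1) then (b, a (k + 1)) ∈ G else (a (k + 1), b) ∈ G)
    with hSdef
  have hSB : ∀ k, S k ⊆ B := fun k =>
    (Finset.inter_subset_left).trans (Finset.filter_subset _ _)
  have hScard : ∀ k < m, 6 * m + 4 ≤ 8 * (S k).card := by
    intro k hk
    set s := B.filter fun b => if p (2 * k) then (a k, b) ∈ G else (b, a k) ∈ G with hs
    set t := B.filter fun b =>
      if p (2 * k + 1) then (b, a (k + 1)) ∈ G else (a (k + 1), b) ∈ G with ht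
    have hsc : 7 * m + 2 ≤ 8 * s.card := by
      have hka : a k ∈ A := haA k (by omega)
      cases hpk : p (2 * k)
      · have := degA (a k) hka false
        simpa [hs, hpk] using this
      · have := degA (a k) hka true
        simpa [hs, hpk] using this
    have htc : 7 * m + 2 ≤ 8 * t.card := by
      have hka : a (k + 1) ∈ A := haA (k + 1) (by omega)
      cases hpk : p (2 * k + 1)
      · -- direction: (a (k+1), b) ∈ G, i.e. out-neighbourhood reversed: use degA with true
        have := degA (a (k + 1)) hka true
        simpa [ht, hpk] using this
      · have := degA (a (k + 1)) hka false
        simpa [ht, hpk] using this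
    have hu : (s ∪ t).card ≤ m :=
      le_trans (Finset.card_le_card (Finset.union_subset (Finset.filter_subset _ _)
        (Finset.filter_subset _ _))) (le_of_eq hB)
    have := Finset.card_union_add_card_inter s t
    have hSk : (S k).card = (s ∩ t).card := rfl
    omega
  -- the "fully good" A-neighbourhood of a vertex of B
  set good : Fin (2 * m + 1) → Finset (Fin (2 * m + 1)) := fun b =>
    (A.filter fun a' => (b, a') ∈ G) ∩ (A.filter fun a' => (a', b) ∈ G) with hgooddef
  have hgoodA : ∀ b, good b ⊆ A := fun b =>
    (Finset.inter_subset_left).trans (Finset.filter_subset _ _)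
  have hgoodcard : ∀ b ∈ B, 6 * m ≤ 8 * (good b).card + 4 := by
    intro b hb
    have h1 := degB b hb true
    have h2 := degB b hb false
    simp only [if_true, Bool.false_eq_true, if_false] at h1 h2
    have hu : ((A.filter fun a' => (b, a') ∈ G) ∪ (A.filter fun a' => (a', b) ∈ G)).card
        ≤ m + 1 :=
      le_trans (Finset.card_le_card (Finset.union_subset (Finset.filter_subset _ _)
        (Finset.filter_subset _ _))) (le_of_eq hA)
    have := Finset.card_union_add_card_inter (A.filter fun a' => (b, a') ∈ G)
      (A.filter fun a' => (a', b) ∈ G)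
    have hgb : (good b).card = ((A.filter fun a' => (b, a') ∈ G) ∩
        (A.filter fun a' => (a', b) ∈ G)).card := rfl
    omega
  have hgoodS : ∀ b ∈ B, ∀ k, a k ∈ good b → a (k + 1) ∈ good b → b ∈ S k := by
    intro b hb k h1 h2
    simp only [hgooddef, Finset.mem_inter, Finset.mem_filter] at h1 h2
    simp only [hSdef, Finset.mem_inter, Finset.mem_filter]
    constructor
    · refine ⟨hb, ?_⟩
      split
      · exact h1.2.2
      · exact h1.1.2
    · refine ⟨hb, ?_⟩
      split
      · exact h2.1.2
      · exact h2.2.2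
  -- Hall's condition
  have hall : ∀ I : Finset (Fin m), I.card ≤ (I.biUnion fun i => S i.val).card := by
    intro I
    rcases I.eq_empty_or_nonempty with rfl | ⟨i₀, hi₀⟩
    · simp
    have hIm : I.card ≤ m := by
      have := Finset.card_le_card (Finset.subset_univ I)
      simpa using this
    by_cases hcase : 8 * I.card ≤ 6 * m + 4
    · have h1 := hScard i₀.val i₀.isLt
      have h2 : (S i₀.val).card ≤ (I.biUnion fun i => S i.val).card :=
        Finset.card_le_card (Finset.subset_biUnion_of_mem (fun i : Fin m => S i.val) hi₀)
      omega
    · have hBsub : B ⊆ I.biUnion fun i => S i.val := by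
        intro b hb
        set K := Finset.univ.filter
          (fun i : Fin m => a i.val ∈ good b ∧ a (i.val + 1) ∈ good b) with hK
        have hKc : (Finset.univ.filter
            (fun i : Fin m => ¬(a i.val ∈ good b ∧ a (i.val + 1) ∈ good b))).card
            ≤ 2 * ((m + 1) - (good b).card) := by
          have hsub : Finset.univ.filter
              (fun i : Fin m => ¬(a i.val ∈ good b ∧ a (i.val + 1) ∈ good b))
              ⊆ (Finset.univ.filter (fun i : Fin m => a i.val ∉ good b)) ∪
                (Finset.univ.filter (fun i : Fin m => a (i.val + 1) ∉ good b)) := by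
            intro i hi
            simp only [Finset.mem_filter, Finset.mem_univ, true_and, not_and_or,
              Finset.mem_union] at hi ⊢
            exact hi
          have hc1 : (Finset.univ.filter (fun i : Fin m => a i.val ∉ good b)).card
              ≤ (A \ good b).card := by
            apply Finset.card_le_card_of_injOn (fun i => a i.val)
            · intro i hi
              simp only [Finset.mem_coe, Finset.mem_filter] at hi
              exact Finset.mem_sdiff.mpr ⟨haA i.val (by omega), hi.2⟩
            · intro i hi j hj hij
              exact Fin.ext (hainj i.val (by omega) j.val (by omega) hij)
          have hc2 : (Finset.univ.filter (fun i : Fin m => a (i.val + 1) ∉ good b)).card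
              ≤ (A \ good b).card := by
            apply Finset.card_le_card_of_injOn (fun i => a (i.val + 1))
            · intro i hi
              simp only [Finset.mem_coe, Finset.mem_filter] at hi
              exact Finset.mem_sdiff.mpr ⟨haA (i.val + 1) (by omega), hi.2⟩
            · intro i hi j hj hij
              have := hainj (i.val + 1) (by omega) (j.val + 1) (by omega) hij
              exact Fin.ext (by omega)
          have hsd : (A \ good b).card = (m + 1) - (good b).card := by
            rw [Finset.card_sdiff_of_subset (hgoodA b), hA]
          have := Finset.card_le_card hsub
          have := Finset.card_union_le
            (Finset.univ.filter (fun i : Fin m => a i.val ∉ good b))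
            (Finset.univ.filter (fun i : Fin m => a (i.val + 1) ∉ good b))
          omega
        have hsplit : m ≤ K.card + (Finset.univ.filter
            (fun i : Fin m => ¬(a i.val ∈ good b ∧ a (i.val + 1) ∈ good b))).card := by
          have hcover : (Finset.univ : Finset (Fin m)) ⊆ K ∪ Finset.univ.filter
              (fun i : Fin m => ¬(a i.val ∈ good b ∧ a (i.val + 1) ∈ good b)) := by
            intro i _
            by_cases hP : a i.val ∈ good b ∧ a (i.val + 1) ∈ good b
            · exact Finset.mem_union_left _ (by simp [hK, hP])
            · exact Finset.mem_union_right _ (Finset.mem_filter.mpr ⟨Finset.mem_univ _, hP⟩)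
          calc m = (Finset.univ : Finset (Fin m)).card := by simp
            _ ≤ _ := le_trans (Finset.card_le_card hcover) (Finset.card_union_le _ _)
        have hgle : (good b).card ≤ m + 1 :=
          le_trans (Finset.card_le_card (hgoodA b)) (le_of_eq hA)
        have hgc := hgoodcard b hb
        -- K and I intersect
        have hIK : (I ∩ K).Nonempty := by
          rw [← Finset.card_pos]
          have := Finset.card_union_add_card_inter I K
          have hUle : (I ∪ K).card ≤ m := by
            have := Finset.card_le_card (Finset.subset_univ (I ∪ K))
            simpa using this
          omega
        obtain ⟨i, hiIK⟩ := hIK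
        rw [Finset.mem_inter] at hiIK
        have hiK := hiIK.2
        simp only [hK, Finset.mem_filter] at hiK
        exact Finset.mem_biUnion.mpr ⟨i, hiIK.1, hgoodS b hb i.val hiK.2.1 hiK.2.2⟩
      calc I.card ≤ m := hIm
        _ = B.card := hB.symm
        _ ≤ _ := Finset.card_le_card hBsub
  obtain ⟨β, hβinj, hβmem⟩ :=
    (Finset.all_card_le_biUnion_card_iff_exists_injective (fun i : Fin m => S i.val)).mp hall
  have hβB : ∀ i, β i ∈ B := fun i => hSB i.val (hβmem i)
  have hβsurj : ∀ v ∈ B, ∃ i : Fin m, β i = v := by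
    intro v hv
    have himg : Finset.univ.image β = B := by
      apply Finset.eq_of_subset_of_card_le
      · intro w hw
        obtain ⟨i, _, rfl⟩ := Finset.mem_image.mp hw
        exact hβB i
      · rw [hB, Finset.card_image_of_injective _ hβinj]
        simp
    have : v ∈ Finset.univ.image β := himg ▸ hv
    obtain ⟨i, _, hi⟩ := Finset.mem_image.mp this
    exact ⟨i, hi⟩
  -- the embedding
  set bfun : ℕ → Fin (2 * m + 1) := fun k =>
    if h : k < m then β ⟨k, h⟩ else x with hbfun
  set f : ℕ → Fin (2 * m + 1) := fun j =>
    if j % 2 = 0 then a (j / 2) else bfun (j / 2) with hf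
  have hfeven : ∀ j, j % 2 = 0 → f j = a (j / 2) := by
    intro j hj; simp only [hf, if_pos hj]
  have hfodd : ∀ j, j % 2 = 1 → ∀ h : j / 2 < m, f j = β ⟨j / 2, h⟩ := by
    intro j hj h
    simp only [hf, if_neg (by omega : ¬ j % 2 = 0), hbfun, dif_pos h]
  refine ⟨f, ⟨?_, ?_⟩, ?_, ?_, ?_⟩
  · -- injectivity
    intro i hi j hj hij
    simp only [Set.mem_Iic] at hi hj
    rcases Nat.even_or_odd i with hie | hio <;> rcases Nat.even_or_odd j with hje | hjo
    · have h1 : i % 2 = 0 := Nat.even_iff.mp hie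
      have h2 : j % 2 = 0 := Nat.even_iff.mp hje
      rw [hfeven i h1, hfeven j h2] at hij
      have := hainj (i / 2) (by omega) (j / 2) (by omega) hij
      omega
    · exfalso
      have h1 : i % 2 = 0 := Nat.even_iff.mp hie
      have h2 : j % 2 = 1 := Nat.odd_iff.mp hjo
      have hjm : j / 2 < m := by omega
      rw [hfeven i h1, hfodd j h2 hjm] at hij
      exact hAnB _ (haA (i / 2) (by omega)) (hij ▸ hβB ⟨j / 2, hjm⟩)
    · exfalso
      have h1 : i % 2 = 1 := Nat.odd_iff.mp hio
      have h2 : j % 2 = 0 := Nat.even_iff.mp hje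
      have him : i / 2 < m := by omega
      rw [hfodd i h1 him, hfeven j h2] at hij
      exact hAnB _ (haA (j / 2) (by omega)) (hij ▸ hβB ⟨i / 2, him⟩)
    · have h1 : i % 2 = 1 := Nat.odd_iff.mp hio
      have h2 : j % 2 = 1 := Nat.odd_iff.mp hjo
      have him : i / 2 < m := by omega
      have hjm : j / 2 < m := by omega
      rw [hfodd i h1 him, hfodd j h2 hjm] at hij
      have := hβinj hij
      have : i / 2 = j / 2 := by
        have := Fin.mk.injEq (i/2) him (j/2) hjm ▸ this
        exact this
      omega
  · -- edges
    intro i hi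
    rcases Nat.even_or_odd i with hie | hio
    · have h1 : i % 2 = 0 := Nat.even_iff.mp hie
      set k := i / 2 with hk
      have hkm : k < m := by omega
      have hik : i = 2 * k := by omega
      have hfi : f i = a k := hfeven i h1
      have hfi1 : f (i + 1) = β ⟨k, hkm⟩ :=
        (hfodd (i + 1) (by omega) (by omega : (i + 1) / 2 < m)).trans
          (congrArg β (Fin.ext (by simp only; omega)))
      have hmem := hβmem ⟨k, hkm⟩
      simp only [hSdef, Finset.mem_inter, Finset.mem_filter] at hmem
      have hG := hmem.1.2
      rw [hfi, hfi1, hik]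
      cases hp : p (2 * k)
      · rw [hp] at hG; simpa using hG
      · rw [hp] at hG; simpa using hG
    · have h1 : i % 2 = 1 := Nat.odd_iff.mp hio
      set k := i / 2 with hk
      have hkm : k < m := by omega
      have hik : i = 2 * k + 1 := by omega
      have hfi : f i = β ⟨k, hkm⟩ := hfodd i h1 hkm
      have hfi1 : f (i + 1) = a (k + 1) := by
        rw [hfeven (i + 1) (by omega)]
        congr 1
        omega
      have hmem := hβmem ⟨k, hkm⟩
      simp only [hSdef, Finset.mem_inter, Finset.mem_filter] at hmem
      have hG := hmem.2.2
      rw [hfi, hfi1, hik]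
      cases hp : p (2 * k + 1)
      · rw [hp] at hG; simpa using hG
      · rw [hp] at hG; simpa using hG
  · -- surjectivity
    intro v
    have hv : v ∈ A ∪ B := hpart ▸ Finset.mem_univ v
    rcases Finset.mem_union.mp hv with hvA | hvB
    · obtain ⟨k, hk, hak⟩ := hasurj v hvA
      refine ⟨2 * k, by omega, ?_⟩
      rw [hfeven (2 * k) (by omega)]
      rw [show 2 * k / 2 = k by omega]
      exact hak
    · obtain ⟨i, hβi⟩ := hβsurj v hvB
      refine ⟨2 * i.val + 1, by have := i.isLt; omega, ?_⟩
      rw [hfodd (2 * i.val + 1) (by omega) (by have := i.isLt; omega)]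
      rw [show (⟨(2 * i.val + 1) / 2, by have := i.isLt; omega⟩ : Fin m) = i from
        Fin.ext (by simp; omega)]
      exact hβi
  · rw [hfeven 0 rfl]
    exact ha0
  · rw [hfeven (2 * m) (by omega), show 2 * m / 2 = m by omega]
    exact ham
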